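/- Let (Xᵢ, Yᵢ), i = 1,…,n, be an i.i.d. sample from independent unit Fréchet X and Y. Then lim_{n→∞} P( n^{-1}(max_{i≤n} Yᵢ/Xᵢ + 1) ≤ x ) = exp(-1/x) for every x > 0. -/

import Mathlib

open MeasureTheory ProbabilityTheory Real Filter
open Set

noncomputable def frG (c u : ℝ) : ℝ := if 0 < u then Real.exp (-c/u) else 0
noncomputable def frg (c u : ℝ) : ℝ := if 0 < u then c * Real.exp (-c/u) / u^2 else 0

lemma frg_nonneg (c : ℝ) (hc : 0 < c) (u : ℝ) : 0 ≤ frg c u := by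
  unfold frg; split
  · positivity
  · exact le_refl _

lemma frg_measurable (c : ℝ) : Measurable (frg c) := by
  unfold frg
  apply Measurable.ite measurableSet_Ioi _ measurable_const
  apply Measurable.div _ (measurable_id.pow_const 2)
  exact measurable_const.mul (Measurable.exp (measurable_const.div measurable_id))

lemma frG_deriv_pos (c : ℝ) (hc : 0 < c) {u : ℝ} (hu : 0 < u) :
    HasDerivAt (frG c) (frg c u) u := by
  have h1 : HasDerivAt (fun v : ℝ => -c / v) (c / u^2) u := by
    have h := (hasDerivAt_inv (ne_of_gt hu)).const_mul (-c)
    have he : (fun v : ℝ => -c / v) = fun y : ℝ => -c * y⁻¹ := by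
      funext v; rw [div_eq_mul_inv]
    rw [he]
    rw [show c / u^2 = -c * -(u^2)⁻¹ by ring]
    exact h
  have h2 : HasDerivAt (fun v : ℝ => Real.exp (-c / v)) (Real.exp (-c/u) * (c / u^2)) u := h1.exp
  have heq : frG c =ᶠ[nhds u] fun v => Real.exp (-c / v) := by
    filter_upwards [IsOpen.mem_nhds isOpen_Ioi hu] with v hv
    simp only [frG, if_pos (mem_Ioi.mp hv)]
  have : HasDerivAt (frG c) (Real.exp (-c/u) * (c / u^2)) u := h2.congr_of_eventuallyEq heq
  convert this using 1
  simp only [frg, if_pos hu]; ring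

lemma frG_tendsto_zero_right (c : ℝ) (hc : 0 < c) :
    Tendsto (fun u => Real.exp (-c/u) / u) (nhdsWithin 0 (Ioi 0)) (nhds 0) := by
  have h1 : Tendsto (fun v : ℝ => v * Real.exp (-(c * v))) atTop (nhds 0) := by
    have h2 : Tendsto (fun v : ℝ => c * v) atTop atTop :=
      tendsto_id.const_mul_atTop hc
    have h3 : Tendsto (fun w : ℝ => c⁻¹ * (w * Real.exp (-w))) atTop (nhds (c⁻¹ * 0)) := by
      have := tendsto_pow_mul_exp_neg_atTop_nhds_zero 1
      simpa using (this.const_mul c⁻¹)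
    have h5 := h3.comp h2
    simp only [mul_zero] at h5
    refine h5.congr fun v => ?_
    simp only [Function.comp]
    field_simp
  have h4 : Tendsto (fun u : ℝ => u⁻¹) (nhdsWithin 0 (Ioi 0)) atTop := tendsto_inv_nhdsGT_zero
  have := h1.comp h4
  convert this using 2 with u
  simp only [Function.comp]
  rw [div_eq_mul_inv, mul_comm]
  congr 1
  rw [neg_div, div_eq_mul_inv]

lemma frG_deriv (c : ℝ) (hc : 0 < c) : ∀ u ∈ Ici (0:ℝ), HasDerivAt (frG c) (frg c u) u := by
  intro u hu
  rcases (mem_Ici.mp hu).lt_or_eq with hu' | hu'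
  · exact frG_deriv_pos c hc hu'
  · subst hu'
    rw [hasDerivAt_iff_tendsto_slope]
    have : frg c 0 = 0 := by simp [frg]
    rw [this]
    rw [← nhdsLT_sup_nhdsGT (0:ℝ)]
    rw [tendsto_sup]
    constructor
    · apply Tendsto.congr' _ tendsto_const_nhds
      filter_upwards [self_mem_nhdsWithin] with v hv
      have hv' : v < 0 := hv
      simp [slope, frG, not_lt.mpr hv'.le, vsub_eq_sub]
    · apply Tendsto.congr' _ (frG_tendsto_zero_right c hc)
      filter_upwards [self_mem_nhdsWithin] with v hv
      have hv' : (0:ℝ) < v := hv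
      simp [slope, frG, hv', lt_irrefl, div_eq_inv_mul]

lemma frG_tendsto_atTop (c : ℝ) : Tendsto (frG c) atTop (nhds 1) := by
  have h1 : Tendsto (fun u : ℝ => Real.exp (-c/u)) atTop (nhds 1) := by
    have h2 : Tendsto (fun u : ℝ => -c/u) atTop (nhds 0) := by
      have h := tendsto_inv_atTop_zero.const_mul (-c)
      simp only [mul_zero] at h
      refine h.congr fun u => ?_
      rw [div_eq_mul_inv]
    simpa [Function.comp_def] using (Real.continuous_exp.tendsto 0).comp h2
  apply h1.congr'
  filter_upwards [eventually_gt_atTop 0] with u hu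
  simp [frG, hu]

lemma frg_integrableOn (c : ℝ) (hc : 0 < c) (a : ℝ) (ha : 0 ≤ a) :
    IntegrableOn (frg c) (Ioi a) := by
  apply integrableOn_Ioi_deriv_of_nonneg' (fun u hu => frG_deriv c hc u (le_trans ha hu))
    (fun u _ => frg_nonneg c hc u) (frG_tendsto_atTop c)

lemma frg_integral_Ioi (c : ℝ) (hc : 0 < c) (a : ℝ) (ha : 0 ≤ a) :
    ∫ u in Ioi a, frg c u = 1 - frG c a :=
  integral_Ioi_of_hasDerivAt_of_nonneg' (fun u hu => frG_deriv c hc u (le_trans ha hu))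
    (fun u _ => frg_nonneg c hc u) (frG_tendsto_atTop c)

noncomputable def frechetMeasure : Measure ℝ :=
  MeasureTheory.volume.withDensity (fun u => ENNReal.ofReal (frg 1 u))

lemma frg_lintegral_Ioi (c : ℝ) (hc : 0 < c) (a : ℝ) (ha : 0 ≤ a) :
    ∫⁻ u in Ioi a, ENNReal.ofReal (frg c u) = ENNReal.ofReal (1 - frG c a) := by
  rw [← ofReal_integral_eq_lintegral_ofReal (frg_integrableOn c hc a ha)
    (Filter.Eventually.of_forall (frg_nonneg c hc)), frg_integral_Ioi c hc a ha]

lemma frechetMeasure_Ioi (x : ℝ) (hx : 0 ≤ x) :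
    frechetMeasure (Ioi x) = ENNReal.ofReal (1 - frG 1 x) := by
  rw [frechetMeasure, withDensity_apply _ measurableSet_Ioi, frg_lintegral_Ioi 1 one_pos x hx]

lemma frechetMeasure_Iic_nonpos (x : ℝ) (hx : x ≤ 0) : frechetMeasure (Iic x) = 0 := by
  rw [frechetMeasure, withDensity_apply _ measurableSet_Iic]
  rw [setLIntegral_congr_fun_ae measurableSet_Iic
    (Filter.Eventually.of_forall (fun u (hu : u ∈ Iic x) => ?_)), lintegral_zero]
  have : ¬ (0 < u) := not_lt.mpr (le_trans hu hx)
  simp [frg, this]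

instance : IsProbabilityMeasure frechetMeasure := by
  constructor
  have h : (univ : Set ℝ) = Iic 0 ∪ Ioi 0 := (Iic_union_Ioi).symm
  rw [h, measure_union (by rw [disjoint_left]; intro a ha ha2; exact absurd (mem_Ioi.mp ha2) (not_lt.mpr ha)) measurableSet_Ioi,
    frechetMeasure_Iic_nonpos 0 le_rfl, frechetMeasure_Ioi 0 le_rfl]
  simp [frG]

lemma frechetMeasure_Iic (x : ℝ) (hx : 0 < x) :
    frechetMeasure (Iic x) = ENNReal.ofReal (Real.exp (-1/x)) := by
  have h1 : Iic x = (Ioi x)ᶜ := by simp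
  rw [h1, measure_compl measurableSet_Ioi (measure_ne_top _ _),
    frechetMeasure_Ioi x hx.le, measure_univ]
  have hG : frG 1 x = Real.exp (-1/x) := by simp [frG, hx]
  rw [hG]
  have he1 : Real.exp (-1/x) ≤ 1 := by
    apply Real.exp_le_one_iff.mpr
    have : (0:ℝ) ≤ 1/x := by positivity
    linarith [neg_div x 1]
  rw [← ENNReal.ofReal_one, ← ENNReal.ofReal_sub _ (by linarith [Real.exp_pos (-1/x)])]
  norm_num

lemma frechet_law {Ω : Type*} [MeasurableSpace Ω] (μ : Measure Ω) [IsProbabilityMeasure μ]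
    (Z : Ω → ℝ) (hZ : Measurable Z) (hpos : ∀ᵐ ω ∂μ, 0 < Z ω)
    (hF : ∀ x : ℝ, 0 < x → μ {ω | Z ω ≤ x} = ENNReal.ofReal (Real.exp (-1 / x))) :
    Measure.map Z μ = frechetMeasure := by
  have : IsProbabilityMeasure (Measure.map Z μ) := Measure.isProbabilityMeasure_map hZ.aemeasurable
  refine Measure.ext_of_Iic _ _ (fun a => ?_)
  rw [Measure.map_apply hZ measurableSet_Iic]
  rcases le_or_gt a 0 with ha | ha
  · rw [frechetMeasure_Iic_nonpos a ha]
    apply measure_mono_null (t := {ω | ¬ 0 < Z ω})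
    · intro ω hω
      simp only [mem_setOf_eq, not_lt]
      exact le_trans (mem_Iic.mp hω) ha
    · exact ae_iff.mp hpos
  · rw [frechetMeasure_Iic a ha, ← hF a ha]
    rfl

lemma frechet_pointwise (s x : ℝ) (hs : 0 < s) (hx : 0 < x) :
    frg 1 x * Real.exp (-1/(s*x)) = (1+1/s)⁻¹ * frg (1+1/s) x := by
  have hc : (0:ℝ) < 1 + 1/s := by positivity
  simp only [frg, if_pos hx]
  have hexp : -(1+1/s)/x = -1/x + -1/(s*x) := by field_simp; ring
  rw [hexp, Real.exp_add]
  field_simp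

lemma frechet_quot_prob (s : ℝ) (hs : 0 < s) :
    (frechetMeasure.prod frechetMeasure) {p : ℝ × ℝ | p.2 / p.1 ≤ s}
      = ENNReal.ofReal (s / (s + 1)) := by
  set c : ℝ := 1 + 1/s with hc_def
  have hc : (0:ℝ) < c := by positivity
  have hB : MeasurableSet {p : ℝ × ℝ | p.2 / p.1 ≤ s} :=
    measurableSet_le (measurable_snd.div measurable_fst) measurable_const
  have hae : ∀ᵐ x ∂frechetMeasure, x ∈ Ioi (0:ℝ) := by
    rw [ae_iff]
    apply measure_mono_null (t := Iic 0)
    · intro u hu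
      simpa using hu
    · exact frechetMeasure_Iic_nonpos 0 le_rfl
  rw [Measure.prod_apply hB]
  have hcongr : (fun x => frechetMeasure (Prod.mk x ⁻¹' {p : ℝ × ℝ | p.2 / p.1 ≤ s}))
      =ᵐ[frechetMeasure] fun x => ENNReal.ofReal (Real.exp (-1/(s*x))) := by
    filter_upwards [hae] with x hx
    have hpre : Prod.mk x ⁻¹' {p : ℝ × ℝ | p.2 / p.1 ≤ s} = Iic (s * x) := by
      ext y
      simp only [mem_preimage, mem_setOf_eq, mem_Iic]
      exact div_le_iff₀ (mem_Ioi.mp hx)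
    rw [hpre, frechetMeasure_Iic (s*x) (mul_pos hs (mem_Ioi.mp hx))]
  have hmeas : Measurable fun x : ℝ => ENNReal.ofReal (Real.exp (-1/(s*x))) := by
    apply Measurable.ennreal_ofReal
    apply Real.measurable_exp.comp
    exact measurable_const.div (measurable_const.mul measurable_id)
  rw [lintegral_congr_ae hcongr, frechetMeasure,
    lintegral_withDensity_eq_lintegral_mul _ ((frg_measurable 1).ennreal_ofReal) hmeas,
    ← lintegral_add_compl _ (measurableSet_Ioi (a := (0:ℝ)))]
  have h2 : ∫⁻ u in (Ioi (0:ℝ))ᶜ,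
      ENNReal.ofReal (frg 1 u) * ENNReal.ofReal (Real.exp (-1/(s*u))) = 0 := by
    rw [compl_Ioi]
    rw [setLIntegral_congr_fun_ae measurableSet_Iic
      (Filter.Eventually.of_forall (fun u (hu : u ∈ Iic 0) => ?_)), lintegral_zero]
    have : ¬ (0 < u) := not_lt.mpr hu
    simp [frg, this]
  have h1 : ∫⁻ u in Ioi (0:ℝ),
      ENNReal.ofReal (frg 1 u) * ENNReal.ofReal (Real.exp (-1/(s*u)))
      = ENNReal.ofReal (s / (s+1)) := by
    rw [setLIntegral_congr_fun_ae measurableSet_Ioi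
      (Filter.Eventually.of_forall (fun u (hu : u ∈ Ioi 0) => ?_))
      (g := fun u => ENNReal.ofReal c⁻¹ * ENNReal.ofReal (frg c u))]
    · rw [lintegral_const_mul _ ((frg_measurable c).ennreal_ofReal),
        frg_lintegral_Ioi c hc 0 le_rfl]
      have hG0 : frG c 0 = 0 := by simp [frG]
      rw [hG0, sub_zero, ENNReal.ofReal_one, mul_one]
      congr 1
      rw [hc_def]
      field_simp
    · rw [← ENNReal.ofReal_mul (frg_nonneg 1 one_pos u),
        frechet_pointwise s u hs (mem_Ioi.mp hu),
        ENNReal.ofReal_mul (by positivity)]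
  simp only [Pi.mul_apply]
  rw [h1, h2, add_zero]


/-- For an i.i.d. sample `(Xᵢ, Yᵢ)` from independent unit Fréchet `X` and `Y`,
`lim_{n→∞} P(n⁻¹(max_{i≤n} Yᵢ/Xᵢ + 1) ≤ x) = exp(-1/x)` for every `x > 0`. -/
theorem frechet_max_quotient_limit {Ω : Type*} [MeasurableSpace Ω] (μ : Measure Ω)
    [IsProbabilityMeasure μ] (X Y : ℕ → Ω → ℝ)
    (hX : ∀ i, Measurable (X i)) (hY : ∀ i, Measurable (Y i))
    (hiid : iIndepFun (fun i ω => (X i ω, Y i ω)) μ)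
    (hident : ∀ i, Measure.map (fun ω => (X i ω, Y i ω)) μ
      = Measure.map (fun ω => (X 0 ω, Y 0 ω)) μ)
    (hindep : ∀ i, IndepFun (X i) (Y i) μ)
    (hXpos : ∀ i, ∀ᵐ ω ∂μ, 0 < X i ω) (hYpos : ∀ i, ∀ᵐ ω ∂μ, 0 < Y i ω)
    (hXF : ∀ i, ∀ x : ℝ, 0 < x → μ {ω | X i ω ≤ x} = ENNReal.ofReal (exp (-1 / x)))
    (hYF : ∀ i, ∀ x : ℝ, 0 < x → μ {ω | Y i ω ≤ x} = ENNReal.ofReal (exp (-1 / x))) :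
    ∀ x : ℝ, 0 < x →
      Tendsto (fun n : ℕ =>
          (μ {ω | (n : ℝ)⁻¹ * ((⨆ i : Fin n, Y i ω / X i ω) + 1) ≤ x}).toReal)
        atTop (nhds (exp (-1 / x))) := by
  intro x hx
  have hlawX : ∀ i, Measure.map (X i) μ = frechetMeasure :=
    fun i => frechet_law μ (X i) (hX i) (hXpos i) (hXF i)
  have hlawY : ∀ i, Measure.map (Y i) μ = frechetMeasure :=
    fun i => frechet_law μ (Y i) (hY i) (hYpos i) (hYF i)
  have hB : ∀ s : ℝ, MeasurableSet {p : ℝ × ℝ | p.2 / p.1 ≤ s} := fun s =>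
    measurableSet_le (measurable_snd.div measurable_fst) measurable_const
  have hpair : ∀ i, ∀ s : ℝ, 0 < s →
      μ ((fun ω => (X i ω, Y i ω)) ⁻¹' {p : ℝ × ℝ | p.2 / p.1 ≤ s})
        = ENNReal.ofReal (s/(s+1)) := by
    intro i s hs
    rw [← Measure.map_apply ((hX i).prodMk (hY i)) (hB s),
      (indepFun_iff_map_prod_eq_prod_map_map (hX i).aemeasurable (hY i).aemeasurable).mp
        (hindep i),
      hlawX i, hlawY i, frechet_quot_prob s hs]
  have hprod : ∀ n : ℕ, ∀ s : ℝ, 0 < s →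
      μ (⋂ i ∈ Finset.range n, (fun ω => (X i ω, Y i ω)) ⁻¹' {p : ℝ × ℝ | p.2 / p.1 ≤ s})
        = ENNReal.ofReal (s/(s+1)) ^ n := by
    intro n s hs
    rw [hiid.measure_inter_preimage_eq_mul (Finset.range n)
      (sets := fun _ => {p : ℝ × ℝ | p.2 / p.1 ≤ s}) (fun i _ => hB s),
      Finset.prod_congr rfl (fun i _ => hpair i s hs), Finset.prod_const, Finset.card_range]
  have hlim := Real.tendsto_one_add_div_pow_exp (-1/x)
  apply Tendsto.congr' _ hlim
  have h1 : Tendsto (fun n : ℕ => (n:ℝ) * x) atTop atTop :=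
    (tendsto_natCast_atTop_atTop).atTop_mul_const hx
  filter_upwards [h1.eventually_gt_atTop 1, eventually_ge_atTop 1] with n hn1 hn
  have hn0 : (0:ℝ) < n := by
    have : (1:ℕ) ≤ n := hn
    exact_mod_cast Nat.lt_of_lt_of_le Nat.zero_lt_one this
  set s : ℝ := (n:ℝ) * x - 1 with hs_def
  have hs : 0 < s := by simp only [hs_def]; linarith
  have hevent : {ω | (n:ℝ)⁻¹ * ((⨆ i : Fin n, Y i ω / X i ω) + 1) ≤ x}
      = ⋂ i ∈ Finset.range n, (fun ω => (X i ω, Y i ω)) ⁻¹'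
          {p : ℝ × ℝ | p.2 / p.1 ≤ s} := by
    haveI : Nonempty (Fin n) := Fin.pos_iff_nonempty.mp hn
    ext ω
    simp only [mem_setOf_eq, mem_iInter, Finset.mem_range, mem_preimage]
    rw [inv_mul_le_iff₀ hn0]
    have step1 : (⨆ i : Fin n, Y i ω / X i ω) + 1 ≤ (n:ℝ) * x
        ↔ (⨆ i : Fin n, Y i ω / X i ω) ≤ s := by
      constructor <;> intro h <;> [linarith; linarith]
    rw [step1, ciSup_le_iff (Set.Finite.bddAbove (finite_range _))]
    exact ⟨fun h i hi => h ⟨i, hi⟩, fun h i => h i i.isLt⟩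
  rw [hevent, hprod n s hs]
  rw [ENNReal.toReal_pow, ENNReal.toReal_ofReal (by positivity)]
  congr 1
  have hsx : s + 1 = (n:ℝ) * x := by simp [hs_def]
  rw [hsx, hs_def]
  field_simp
  ring
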